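/- Let q ≡ 5 (mod 8) be a prime power, χ a generator of the character group of F_q^×, 1 ≤ r ≤ q-2, and let b_1, ..., b_{(q-1)/4} be the nonzero fourth powers of F_q. Then det[χ^r(b_i + b_j) + χ^r(b_i - b_j)]_{1≤i,j≤(q-1)/4} = (1/2)^{(q-1)/4} · ∏_{k=0}^{(q-5)/4} (J_q(χ^r, χ^{2k}) + J_q(χ^r, φχ^{2k})), where φ is the quadratic character of F_q. -/

import Mathlib

set_option maxHeartbeats 1000000

open Finset

private lemma eq_of_mod_eq' {m a b : ℕ} (h : a % m = b % m) (ha : a ≤ b) (h2 : b < a + m) :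
    a = b := by
  have hd : m ∣ b - a := (Nat.modEq_iff_dvd' ha).mp h
  rcases Nat.eq_zero_or_pos (b - a) with h0 | h0
  · omega
  · have := Nat.le_of_dvd h0 hd
    omega

private lemma eq_of_mod_eq {m a b : ℕ} (h : a % m = b % m) (h1 : a < b + m) (h2 : b < a + m) :
    a = b := by
  rcases le_total a b with hab | hab
  · exact eq_of_mod_eq' h hab h2
  · exact (eq_of_mod_eq' h.symm hab h1).symm

section Chars

variable {F : Type*} [Field F] [Fintype F] [DecidableEq F]

omit [DecidableEq F] in
private lemma sum_shift_add (A B : MulChar F ℂ) :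
    ∑ x : F, A x * B (x + 1) = A (-1) * jacobiSum A B := by
  have hA : A (-1) * A (-1) = 1 := by
    rw [← map_mul]; norm_num
  have h : jacobiSum A B = A (-1) * ∑ x : F, A x * B (x + 1) := by
    rw [jacobiSum, mul_sum]
    refine Fintype.sum_equiv (Equiv.neg F) _ _ fun x => ?_
    rw [Equiv.neg_apply, show (-x : F) = -1 * x by ring, map_mul,
      show (-1 * x + 1 : F) = 1 - x by ring]
    linear_combination (-(A x * B (1 - x))) * hA
  rw [h, ← mul_assoc, hA, one_mul]

omit [DecidableEq F] in
private lemma sum_shift_sub (A B : MulChar F ℂ) :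
    ∑ x : F, A x * B (x - 1) = B (-1) * jacobiSum A B := by
  rw [jacobiSum, mul_sum]
  refine Fintype.sum_congr _ _ fun x => ?_
  rw [show (x - 1 : F) = -1 * (1 - x) by ring, map_mul]
  ring

private lemma jacobiSum_flip (A B : MulChar F ℂ) :
    jacobiSum A B = A (-1) * jacobiSum A (A * B)⁻¹ := by
  have hA : A (-1) * A (-1) = 1 := by rw [← map_mul]; norm_num
  have hmem : ∀ a : F, a ∈ univ \ {0, 1} → a / (a - 1) ∈ (univ \ {0, 1} : Finset F) := by
    intro a ha
    simp only [mem_sdiff, mem_univ, mem_insert, mem_singleton, true_and, not_or] at ha ⊢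
    have h1 : a - 1 ≠ 0 := sub_ne_zero.mpr ha.2
    refine ⟨div_ne_zero ha.1 h1, fun hcon => ?_⟩
    rw [div_eq_one_iff_eq h1] at hcon
    exact one_ne_zero (α := F) (by linear_combination hcon)
  have hinv : ∀ a : F, a ∈ univ \ {0, 1} → (a / (a-1)) / (a / (a-1) - 1) = a := by
    intro a ha
    simp only [mem_sdiff, mem_univ, mem_insert, mem_singleton, true_and, not_or] at ha
    have h1 : a - 1 ≠ 0 := sub_ne_zero.mpr ha.2
    rw [div_sub_one h1, show a - (a-1) = (1:F) by ring]
    field_simp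
  have key : jacobiSum A (A * B)⁻¹ = A (-1) * jacobiSum A B := by
    rw [jacobiSum_eq_sum_sdiff, jacobiSum_eq_sum_sdiff, mul_sum]
    refine sum_nbij' (fun x => x / (x - 1)) (fun x => x / (x - 1)) hmem hmem hinv hinv ?_
    intro a ha
    simp only [mem_sdiff, mem_univ, mem_insert, mem_singleton, true_and, not_or] at ha
    have h1 : a - 1 ≠ 0 := sub_ne_zero.mpr ha.2
    have h1' : (1 : F) - a ≠ 0 := fun h => ha.2 (by linear_combination -h)
    have h2 : (1 : F) - a/(a-1) = (1-a)⁻¹ := by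
      field_simp
      ring
    beta_reduce
    rw [h2, MulChar.inv_apply', MulChar.mul_apply,
      show a/(a-1) = -1 * (a * (1-a)⁻¹) by field_simp; ring,
      map_mul, map_mul, show ((1:F)-a)⁻¹ = (1-a)⁻¹ from rfl]
    linear_combination (-(A a * A (1-a)⁻¹ * B (1-a)⁻¹)) * hA
  rw [key, ← mul_assoc, hA, one_mul]

end Chars



/-- For `q ≡ 5 (mod 8)`, `χ` a generator, `1 ≤ r ≤ q-2`, and `b_1,…,b_{(q-1)/4}`
the nonzero fourth powers of `F_q`,
`det[χ^r(b_i+b_j) + χ^r(b_i-b_j)] = (1/2)^{(q-1)/4} ∏_{k=0}^{(q-5)/4}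
  (J_q(χ^r, χ^{2k}) + J_q(χ^r, φχ^{2k}))`, where `φ = χ^{(q-1)/2}`. -/
theorem det_B_q_4_eq (p n q : ℕ) [Fact p.Prime] (hn : 0 < n) (hq : q = p ^ n)
    (hq5 : q % 8 = 5)
    (F : Type*) [Field F] [Fintype F] (hcard : Fintype.card F = q)
    (χ : MulChar F ℂ) (hχ : ∀ ψ : MulChar F ℂ, ψ ∈ Subgroup.zpowers χ)
    (r : ℕ) (hr1 : 1 ≤ r) (hr2 : r ≤ q - 2)
    (b : Fin ((q - 1) / 4) → F) (hb : Function.Injective b)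
    (hbimg : ∀ x : F, (∃ i, b i = x) ↔ ∃ y : F, y ≠ 0 ∧ y ^ 4 = x) :
    (Matrix.of fun i j => (χ ^ r) (b i + b j) + (χ ^ r) (b i - b j)).det
      = (1 / 2 : ℂ) ^ ((q - 1) / 4)
          * ∏ k ∈ Finset.range ((q - 1) / 4),
              (jacobiSum (χ ^ r) (χ ^ (2 * k))
                + jacobiSum (χ ^ r) (χ ^ ((q - 1) / 2) * χ ^ (2 * k))) := by
  classical
  revert b
  set m : ℕ := (q - 1) / 4 with hm
  intro b hb hbimg
  have hq5' : 5 ≤ q := by omega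
  have hqm : q - 1 = 4 * m := by omega
  have hmodd : m % 2 = 1 := by omega
  have hm0 : 0 < m := by omega
  have hcardu : Fintype.card Fˣ = q - 1 := by rw [Fintype.card_units, hcard]
  have hchiM : χ ^ (q - 1) = 1 := by
    have := χ.pow_card_eq_one
    rwa [hcardu] at this
  -- order of χ
  have hζ := Complex.isPrimitiveRoot_exp (q - 1) (show q - 1 ≠ 0 by omega)
  obtain ⟨χ₀, hχ₀⟩ := MulChar.exists_mulChar_orderOf F (by rw [hcard] : q - 1 ∣ Fintype.card F - 1) hζ
  have hord : orderOf χ = q - 1 := by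
    refine Nat.dvd_antisymm ?_ (hχ₀ ▸ orderOf_dvd_of_mem_zpowers (hχ χ₀))
    have h := MulChar.orderOf_dvd_card_sub_one F χ
    rwa [hcard] at h
  -- generator of units
  obtain ⟨g0, hg0⟩ := IsCyclic.exists_generator (α := Fˣ)
  have hgpow : ∀ x : Fˣ, ∃ t : ℕ, g0 ^ t = x := fun x =>
    (mem_powers_iff_mem_zpowers).mpr (hg0 x)
  -- basic value lemmas
  have hpow : ∀ (a : ℕ) (x : F), x ≠ 0 → (χ ^ a) x = χ x ^ a := by
    intro a x hx
    have h := MulChar.pow_apply_coe χ a (isUnit_iff_ne_zero.mpr hx).unit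
    simpa [IsUnit.unit_spec] using h
  have hne : ∀ x : F, x ≠ 0 → χ x ≠ 0 := by
    intro x hx
    have h1 : χ x * χ x⁻¹ = 1 := by rw [← map_mul, mul_inv_cancel₀ hx, map_one]
    exact left_ne_zero_of_mul_eq_one h1
  have hinvv : ∀ x : F, x ≠ 0 → χ x⁻¹ = (χ x)⁻¹ := by
    intro x hx
    have h1 : χ x * χ x⁻¹ = 1 := by rw [← map_mul, mul_inv_cancel₀ hx, map_one]
    exact (inv_eq_of_mul_eq_one_right h1).symm
  have hroot : ∀ x : F, x ≠ 0 → χ x ^ (q - 1) = 1 := by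
    intro x hx
    rw [← hpow _ _ hx, hchiM, MulChar.one_apply (isUnit_iff_ne_zero.mpr hx)]
  have hgool : orderOf (χ (g0 : F)) = q - 1 := by
    refine Nat.dvd_antisymm (orderOf_dvd_of_pow_eq_one (hroot _ (Units.ne_zero g0))) ?_
    rw [← hord]
    refine orderOf_dvd_of_pow_eq_one ?_
    refine (MulChar.eq_iff hg0 _ _).mpr ?_
    rw [MulChar.pow_apply_coe, pow_orderOf_eq_one, MulChar.one_apply_coe]
  have hdvd : ∀ t : ℕ, χ (g0 : F) ^ t = 1 ↔ (q - 1) ∣ t := by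
    intro t
    rw [← hgool]
    exact ⟨fun h => orderOf_dvd_of_pow_eq_one h, fun h => orderOf_dvd_iff_pow_eq_one.mp h⟩
  have hg0F : ∀ t : ℕ, ((g0 : F)) ^ t = 1 ↔ (q - 1) ∣ t := by
    intro t
    have ho : orderOf (g0 : F) = q - 1 := by
      rw [orderOf_units, orderOf_eq_card_of_forall_mem_zpowers hg0, Nat.card_eq_fintype_card,
        hcardu]
    rw [← ho]
    exact ⟨fun h => orderOf_dvd_of_pow_eq_one h, fun h => orderOf_dvd_iff_pow_eq_one.mp h⟩
  -- -1 ≠ 1 in F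
  have hneg1ne : (-1 : F) ≠ 1 := by
    intro hcon
    have h2 : (2 : F) = 0 := by linear_combination -hcon
    haveI := ringChar.charP F
    have hchar : ringChar F ∣ 2 :=
      (CharP.cast_eq_zero_iff F (ringChar F) 2).mp (by exact_mod_cast h2)
    have hprime : (ringChar F).Prime := CharP.char_is_prime F (ringChar F)
    have hc2 : ringChar F = 2 := (Nat.prime_dvd_prime_iff_eq hprime Nat.prime_two).mp hchar
    obtain ⟨k, hk⟩ := FiniteField.card F (ringChar F)
    rw [hc2, hcard] at hk
    have h2q : (2:ℕ) ∣ q := by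
      rw [hk.2]
      exact dvd_pow_self 2 k.pos.ne'
    omega
  -- χ (-1) = -1
  have hχneg : χ (-1 : F) = -1 := by
    have hsq : χ (-1 : F) * χ (-1 : F) = 1 := by
      rw [← map_mul]
      norm_num
    rcases mul_self_eq_one_iff.mp hsq with h1 | h1
    · exfalso
      obtain ⟨t, ht⟩ := hgpow (-1 : Fˣ)
      have htF : ((g0 : F)) ^ t = -1 := by
        rw [← Units.val_pow_eq_pow_val, ht, Units.val_neg, Units.val_one]
      have hv : χ (g0 : F) ^ t = 1 := by
        rw [← map_pow, htF, h1]
      have := (hg0F t).mpr ((hdvd t).mp hv)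
      rw [htF] at this
      exact hneg1ne this
    · exact h1
  have hχe_neg : ∀ e : ℕ, (χ ^ e) (-1 : F) = (-1) ^ e := by
    intro e
    rw [hpow e _ (neg_ne_zero.mpr one_ne_zero), hχneg]
  -- the predicate "nonzero fourth power"
  set P : F → Prop := fun x => ∃ y : F, y ≠ 0 ∧ y ^ 4 = x with hP
  have hPb : ∀ i, P (b i) := fun i => (hbimg (b i)).mp ⟨i, rfl⟩
  have hsurj : ∀ x, P x → ∃ i, b i = x := fun x hx => (hbimg x).mpr hx
  have hP0 : ∀ x, P x → x ≠ 0 := by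
    rintro x ⟨y, hy, rfl⟩
    exact pow_ne_zero 4 hy
  have hb0 : ∀ i, b i ≠ 0 := fun i => hP0 _ (hPb i)
  have hPmul : ∀ x z, P x → P z → P (x * z) := by
    rintro x z ⟨y, hy, rfl⟩ ⟨w, hw, rfl⟩
    exact ⟨y * w, mul_ne_zero hy hw, by ring⟩
  have hP1 : P (1 : F) := ⟨1, one_ne_zero, one_pow 4⟩
  have hPinv : ∀ x, P x → P x⁻¹ := by
    rintro x ⟨y, hy, rfl⟩
    exact ⟨y⁻¹, inv_ne_zero hy, by rw [inv_pow]⟩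
  -- reindexing gadget
  have gadget : ∀ f : F → F, Function.Injective f → (∀ x, P x → P (f x)) →
      ∃ σ : Equiv.Perm (Fin m), ∀ k, b (σ k) = f (b k) := by
    intro f hfinj hfP
    have h1 : ∀ k : Fin m, ∃ i, b i = f (b k) := fun k => hsurj _ (hfP _ (hPb k))
    choose σ0 hσ0 using h1
    have hσinj : Function.Injective σ0 := by
      intro k k' hkk
      have h2 : f (b k) = f (b k') := by
        rw [← hσ0 k, ← hσ0 k', hkk]
      exact hb (hfinj h2)
    exact ⟨Equiv.ofBijective σ0 (Finite.injective_iff_bijective.mp hσinj), fun k => hσ0 k⟩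
  have sum_reindex : ∀ f : F → F, Function.Injective f → (∀ x, P x → P (f x)) →
      ∀ G : F → ℂ, ∑ k : Fin m, G (f (b k)) = ∑ k : Fin m, G (b k) := by
    intro f h1 h2 G
    obtain ⟨σ, hσ⟩ := gadget f h1 h2
    rw [← Equiv.sum_comp σ (fun k => G (b k))]
    exact Fintype.sum_congr _ _ fun k => by rw [hσ]
  have prod_reindexF : ∀ f : F → F, Function.Injective f → (∀ x, P x → P (f x)) →
      ∏ k : Fin m, f (b k) = ∏ k : Fin m, b k := by
    intro f h1 h2
    obtain ⟨σ, hσ⟩ := gadget f h1 h2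
    rw [← Equiv.prod_comp σ (fun k => b k)]
    exact Fintype.prod_congr _ _ fun k => (hσ k).symm
  -- product of all fourth powers is 1
  have hprodb : ∏ k : Fin m, b k = 1 := by
    have h1 : ∏ k : Fin m, (b k)⁻¹ = ∏ k : Fin m, b k :=
      prod_reindexF _ inv_injective hPinv
    rw [Finset.prod_inv_distrib] at h1
    have hx0 : (∏ k : Fin m, b k) ≠ 0 := Finset.prod_ne_zero_iff.mpr fun k _ => hb0 k
    have hsq : (∏ k : Fin m, b k) * (∏ k : Fin m, b k) = 1 := by
      nth_rewrite 1 [← h1]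
      exact inv_mul_cancel₀ hx0
    rcases mul_self_eq_one_iff.mp hsq with h | h
    · exact h
    · exfalso
      have hPprod : P (∏ k : Fin m, b k) :=
        Finset.prod_induction b P hPmul hP1 fun i _ => hPb i
      rw [h] at hPprod
      obtain ⟨y, hy, hy4⟩ := hPprod
      obtain ⟨t, ht⟩ := hgpow (isUnit_iff_ne_zero.mpr hy).unit
      have hyF : ((g0 : F)) ^ t = y := by
        rw [← Units.val_pow_eq_pow_val, ht, IsUnit.unit_spec]
      have h8 : ((g0 : F)) ^ (8 * t) = 1 := by
        rw [show 8 * t = t * 4 * 2 by ring, pow_mul, pow_mul, hyF, hy4]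
        norm_num
      obtain ⟨c, hc⟩ := (hg0F _).mp h8
      rw [hqm, show 4 * m * c = 4 * (m * c) from by ring] at hc
      have h2t : 2 * t = m * c := by omega
      have hceven : (2 : ℕ) ∣ c := by
        rcases Nat.even_or_odd c with he | ho
        · exact he.two_dvd
        · exfalso
          have hodd : (m * c) % 2 = 1 := Nat.odd_iff.mp ((Nat.odd_iff.mpr hmodd).mul ho)
          omega
      obtain ⟨u, rfl⟩ := hceven
      rw [show m * (2 * u) = 2 * (m * u) from by ring] at h2t
      have htmu : t = m * u := by omega
      have h4t : (q - 1) ∣ 4 * t := ⟨u, by rw [hqm, htmu]; ring⟩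
      have : ((g0 : F)) ^ (4 * t) = 1 := (hg0F _).mpr h4t
      rw [show 4 * t = t * 4 by ring, pow_mul, hyF, hy4] at this
      exact hneg1ne this
  -- definitions
  set gfun : F → ℂ := fun x => (χ ^ r) (x + 1) + (χ ^ r) (x - 1) with hgfun
  set A : Matrix (Fin m) (Fin m) ℂ := Matrix.of fun i j => gfun (b i * (b j)⁻¹) with hA
  set U : Matrix (Fin m) (Fin m) ℂ := Matrix.of fun i j => (χ ^ (q - 1 - (j : ℕ))) (b i) with hU
  set V : Matrix (Fin m) (Fin m) ℂ := Matrix.of fun j k => (χ ^ ((j : ℕ))) (b k) with hV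
  set lam : Fin m → ℂ := fun j => ∑ k : Fin m, gfun (b k) * (χ ^ ((j : ℕ))) (b k) with hlamdef
  have hM : (Matrix.of fun i j => (χ ^ r) (b i + b j) + (χ ^ r) (b i - b j)
        : Matrix (Fin m) (Fin m) ℂ)
      = A * Matrix.diagonal (fun j => (χ ^ r) (b j)) := by
    ext i j
    rw [Matrix.mul_diagonal, hA, hgfun]
    simp only [Matrix.of_apply]
    have hbj := hb0 j
    have h1 : (b i * (b j)⁻¹ + 1) * b j = b i + b j := by field_simp
    have h2 : (b i * (b j)⁻¹ - 1) * b j = b i - b j := by field_simp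
    rw [add_mul, ← map_mul, ← map_mul, h1, h2]
  have hprodchi : ∏ j : Fin m, (χ ^ r) (b j) = 1 := by
    rw [← map_prod (χ ^ r) b Finset.univ, hprodb, map_one]
  have hdetM : (Matrix.of fun i j => (χ ^ r) (b i + b j) + (χ ^ r) (b i - b j)
        : Matrix (Fin m) (Fin m) ℂ).det = A.det := by
    rw [hM, Matrix.det_mul, Matrix.det_diagonal, hprodchi, mul_one]
  -- orthogonality
  have hVU : V * U = (m : ℂ) • (1 : Matrix (Fin m) (Fin m) ℂ) := by
    ext j j'
    have hj : (j : ℕ) < m := j.isLt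
    have hj' : (j' : ℕ) < m := j'.isLt
    rw [Matrix.mul_apply]
    have hterm : ∀ k : Fin m, V j k * U k j' = χ (b k) ^ (q - 1 + (j : ℕ) - (j' : ℕ)) := by
      intro k
      rw [hV, hU]
      simp only [Matrix.of_apply]
      rw [hpow _ _ (hb0 k), hpow _ _ (hb0 k), ← pow_add]
      congr 1
      omega
    rw [Finset.sum_congr rfl fun k _ => hterm k]
    rcases eq_or_ne j j' with rfl | hjj
    · have he : q - 1 + (j : ℕ) - (j : ℕ) = q - 1 := by omega
      rw [he, Finset.sum_congr rfl fun k _ => hroot _ (hb0 k)]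
      simp [Matrix.one_apply_eq, Finset.card_univ]
    · have hne1 : χ ((g0 : F)) ^ (4 * (q - 1 + (j : ℕ) - (j' : ℕ))) ≠ 1 := by
        intro hcon
        obtain ⟨c, hc⟩ := (hdvd _).mp hcon
        have hb1 : (q - 1) * 3 < (q - 1) * c := by omega
        have hb2 : (q - 1) * c < (q - 1) * 5 := by omega
        have hc3 : 3 < c := Nat.lt_of_mul_lt_mul_left hb1
        have hc5 : c < 5 := Nat.lt_of_mul_lt_mul_left hb2
        have hc4 : c = 4 := by omega
        rw [hc4] at hc
        exact hjj (Fin.ext (by omega))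
      have hg04 : ((g0 : F)) ^ 4 ≠ 0 := pow_ne_zero _ (Units.ne_zero g0)
      have hstep := sum_reindex (fun x => ((g0 : F)) ^ 4 * x)
        (mul_right_injective₀ hg04)
        (fun x hx => hPmul _ _ ⟨(g0 : F), Units.ne_zero g0, rfl⟩ hx)
        (fun x => χ x ^ (q - 1 + (j : ℕ) - (j' : ℕ)))
    
      have hsplit : ∀ k : Fin m, χ (((g0 : F)) ^ 4 * b k) ^ (q - 1 + (j : ℕ) - (j' : ℕ))
          = χ ((g0 : F)) ^ (4 * (q - 1 + (j : ℕ) - (j' : ℕ)))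
            * χ (b k) ^ (q - 1 + (j : ℕ) - (j' : ℕ)) := by
        intro k
        rw [map_mul, mul_pow, map_pow, ← pow_mul]
      rw [Finset.sum_congr rfl fun k _ => hsplit k, ← Finset.mul_sum] at hstep
      have hS : ∑ k : Fin m, χ (b k) ^ (q - 1 + (j : ℕ) - (j' : ℕ)) = 0 := by
        by_contra hS0
        refine hne1 (mul_right_cancel₀ hS0 ?_)
        rw [one_mul]
        exact hstep
      rw [hS]
      simp [Matrix.one_apply_ne hjj]
  have hdetU : U.det ≠ 0 := by
    intro h0
    have h1 : (V * U).det = 0 := by rw [Matrix.det_mul, h0, mul_zero]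
    rw [hVU, Matrix.det_smul, Matrix.det_one, mul_one, Fintype.card_fin] at h1
    exact absurd (Nat.cast_eq_zero.mp (pow_eq_zero_iff hm0.ne' |>.mp h1)) hm0.ne'
  -- eigen relation
  have hAU : A * U = U * Matrix.diagonal lam := by
    ext i j
    have hj : (j : ℕ) < m := j.isLt
    rw [Matrix.mul_apply, Matrix.mul_diagonal]
    have hfinj : Function.Injective (fun x : F => b i * x⁻¹) := by
      intro x y hxy
      simp only at hxy
      exact inv_injective (mul_left_cancel₀ (hb0 i) hxy)
    have hfP : ∀ x, P x → P (b i * x⁻¹) := fun x hx => hPmul _ _ (hPb i) (hPinv x hx)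
    have hre := sum_reindex _ hfinj hfP
      (fun x => gfun (b i * x⁻¹) * (χ ^ (q - 1 - (j : ℕ))) x)
    calc ∑ k : Fin m, A i k * U k j
        = ∑ k : Fin m, gfun (b i * (b k)⁻¹) * (χ ^ (q - 1 - (j : ℕ))) (b k) := by
          refine Finset.sum_congr rfl fun k _ => ?_
          rw [hA, hU]
          simp only [Matrix.of_apply]
      _ = ∑ k : Fin m, gfun (b i * (b i * (b k)⁻¹)⁻¹)
            * (χ ^ (q - 1 - (j : ℕ))) (b i * (b k)⁻¹) := hre.symm
      _ = ∑ k : Fin m, χ (b i) ^ (q - 1 - (j : ℕ)) * (gfun (b k) * χ (b k) ^ (j : ℕ)) := by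
          refine Finset.sum_congr rfl fun k _ => ?_
          have hbk := hb0 k
          have hbi := hb0 i
          have harg : b i * (b i * (b k)⁻¹)⁻¹ = b k := by
            field_simp
          have hargne : b i * (b k)⁻¹ ≠ 0 := mul_ne_zero hbi (inv_ne_zero hbk)
          have hinvpow : (χ (b k))⁻¹ ^ (q - 1 - (j : ℕ)) = χ (b k) ^ (j : ℕ) := by
            rw [inv_pow]
            refine inv_eq_of_mul_eq_one_right ?_
            rw [← pow_add, show q - 1 - (j : ℕ) + (j : ℕ) = q - 1 by omega]
            exact hroot _ hbk
          rw [harg, hpow _ _ hargne, map_mul, mul_pow, hinvv _ hbk, hinvpow]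
          ring
      _ = χ (b i) ^ (q - 1 - (j : ℕ)) * ∑ k : Fin m, gfun (b k) * χ (b k) ^ (j : ℕ) := by
          rw [← Finset.mul_sum]
      _ = U i j * lam j := by
          rw [hU, hlamdef]
          simp only [Matrix.of_apply]
          rw [hpow _ _ (hb0 i)]
          congr 1
          refine Finset.sum_congr rfl fun k _ => ?_
          rw [hpow _ _ (hb0 k)]
  have hdetA : A.det = ∏ j : Fin m, lam j := by
    have h := congrArg Matrix.det hAU
    rw [Matrix.det_mul, Matrix.det_mul, Matrix.det_diagonal,
      mul_comm U.det (∏ j : Fin m, lam j)] at h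
    exact mul_right_cancel₀ hdetU h
  -- sum over fourth powers as filtered sum
  have hfilter : ∀ G : F → ℂ, ∑ k : Fin m, G (b k) = ∑ x ∈ Finset.univ.filter P, G x := by
    intro G
    refine Finset.sum_bij (fun k _ => b k) ?_ ?_ ?_ ?_
    · intro k _
      exact Finset.mem_filter.mpr ⟨Finset.mem_univ _, hPb k⟩
    · intro k _ k' _ h
      exact hb h
    · intro x hx
      obtain ⟨i, hi⟩ := hsurj x (Finset.mem_filter.mp hx).2
      exact ⟨i, Finset.mem_univ _, hi⟩
    · intro k _
      rfl
  -- indicator of fourth powers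
  have hindic : ∀ x : F, x ≠ 0 →
      (∑ s ∈ Finset.range 4, χ x ^ (s * m)) = if P x then (4 : ℂ) else 0 := by
    intro x hx
    have hterm : ∀ s : ℕ, χ x ^ (s * m) = (χ x ^ m) ^ s := by
      intro s
      rw [← pow_mul, mul_comm]
    rw [Finset.sum_congr rfl fun s _ => hterm s]
    have hw4 : (χ x ^ m) ^ 4 = 1 := by
      rw [← pow_mul, show m * 4 = q - 1 by omega]
      exact hroot x hx
    by_cases hPx : P x
    · have hw1 : χ x ^ m = 1 := by
        obtain ⟨y, hy, hyx⟩ := hPx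
        rw [← hyx, map_pow, ← pow_mul, show 4 * m = q - 1 by omega]
        exact hroot y hy
      rw [hw1, if_pos hPx]
      simp
    · have hw1 : χ x ^ m ≠ 1 := by
        intro hcon
        apply hPx
        obtain ⟨t, ht⟩ := hgpow (isUnit_iff_ne_zero.mpr hx).unit
        have hxF : ((g0 : F)) ^ t = x := by
          rw [← Units.val_pow_eq_pow_val, ht, IsUnit.unit_spec]
        have hdv : χ ((g0 : F)) ^ (t * m) = 1 := by
          rw [pow_mul, ← map_pow, hxF]
          exact hcon
        obtain ⟨c, hc⟩ := (hdvd _).mp hdv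
        rw [hqm, show 4 * m * c = (4 * c) * m from by ring] at hc
        have ht4 : t = 4 * c := Nat.eq_of_mul_eq_mul_right hm0 hc
        refine ⟨((g0 : F)) ^ c, pow_ne_zero _ (Units.ne_zero g0), ?_⟩
        rw [← pow_mul, ← hxF, ht4]
        ring_nf
      rw [if_neg hPx, geom_sum_eq hw1 4, hw4]
      simp
  -- the basic character sum
  have hTe : ∀ e : ℕ, (∑ x : F, (χ ^ e) x * gfun x)
      = ((-1 : ℂ) ^ e + (-1) ^ r) * jacobiSum (χ ^ e) (χ ^ r) := by
    intro e
    rw [hgfun]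
    simp only
    rw [show (∑ x : F, (χ ^ e) x * ((χ ^ r) (x + 1) + (χ ^ r) (x - 1)))
        = (∑ x : F, (χ ^ e) x * (χ ^ r) (x + 1)) + ∑ x : F, (χ ^ e) x * (χ ^ r) (x - 1) from by
      rw [← Finset.sum_add_distrib]
      exact Finset.sum_congr rfl fun x _ => by ring]
    rw [sum_shift_add (χ ^ e) (χ ^ r), sum_shift_sub (χ ^ e) (χ ^ r), hχe_neg e, hχe_neg r]
    ring
  -- expansion of the eigenvalues
  have hkey : ∀ j : Fin m, (4 : ℂ) * lam j
      = ∑ s ∈ Finset.range 4,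
          ((-1 : ℂ) ^ (s * m + (j : ℕ)) + (-1) ^ r) * jacobiSum (χ ^ (s * m + (j : ℕ))) (χ ^ r) := by
    intro j
    have h1 : (4 : ℂ) * lam j
        = ∑ x ∈ Finset.univ.filter P, (4 : ℂ) * (gfun x * (χ ^ ((j : ℕ))) x) := by
      rw [hlamdef]
      simp only
      rw [hfilter (fun x => gfun x * (χ ^ ((j : ℕ))) x), Finset.mul_sum]
    have h2 : ∑ x ∈ Finset.univ.filter (fun x : F => x ≠ 0),
          (∑ s ∈ Finset.range 4, χ x ^ (s * m)) * (gfun x * (χ ^ ((j : ℕ))) x)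
        = ∑ x ∈ Finset.univ.filter P, (4 : ℂ) * (gfun x * (χ ^ ((j : ℕ))) x) := by
      rw [Finset.sum_congr rfl (fun x hx => by
        rw [hindic x (Finset.mem_filter.mp hx).2, ite_mul, zero_mul]), ← Finset.sum_filter,
        Finset.filter_filter]
      congr 1
      apply Finset.filter_congr
      intro x _
      simp only [ne_eq]
      exact ⟨fun h => h.2, fun h => ⟨hP0 x h, h⟩⟩
    have h3 : ∑ x ∈ Finset.univ.filter (fun x : F => x ≠ 0),
          (∑ s ∈ Finset.range 4, χ x ^ (s * m)) * (gfun x * (χ ^ ((j : ℕ))) x)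
        = ∑ s ∈ Finset.range 4, ∑ x ∈ Finset.univ.filter (fun x : F => x ≠ 0),
            χ x ^ (s * m) * (gfun x * (χ ^ ((j : ℕ))) x) := by
      rw [Finset.sum_congr rfl (fun x _ => by rw [Finset.sum_mul])]
      exact Finset.sum_comm
    have h4 : ∀ s : ℕ, ∑ x ∈ Finset.univ.filter (fun x : F => x ≠ 0),
          χ x ^ (s * m) * (gfun x * (χ ^ ((j : ℕ))) x)
        = ∑ x : F, (χ ^ (s * m + (j : ℕ))) x * gfun x := by
      intro s
      have hzero : ∀ x ∈ (Finset.univ : Finset F),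
          (χ ^ (s * m + (j : ℕ))) x * gfun x ≠ 0 → x ≠ 0 := by
        intro x _ hne' hx0
        rw [hx0] at hne'
        rw [MulChar.map_nonunit _ (by simpa using not_isUnit_zero), zero_mul] at hne'
        exact hne' rfl
      rw [← Finset.sum_filter_of_ne hzero]
      refine Finset.sum_congr rfl fun x hx => ?_
      have hx0 : x ≠ 0 := (Finset.mem_filter.mp hx).2
      rw [hpow _ _ hx0, hpow _ _ hx0, pow_add]
      ring
    rw [h1, ← h2, h3]
    exact Finset.sum_congr rfl fun s _ => by rw [h4 s, hTe]
  -- sign helper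
  have hsgn : ∀ s t : ℕ, (-1 : ℂ) ^ (s * m + t) = (-1) ^ s * (-1) ^ t := by
    intro s t
    rw [pow_add]
    congr 1
    rw [show s * m = m * s from by ring, pow_mul,
      (Odd.neg_one_pow (Nat.odd_iff.mpr hmodd) : (-1 : ℂ) ^ m = -1)]
  have hchi_inv : ∀ a c : ℕ, a + c = 2 * (q - 1) → (χ ^ a)⁻¹ = χ ^ c := by
    intro a c h
    refine inv_eq_of_mul_eq_one_right ?_
    rw [← pow_add, h, show 2 * (q - 1) = (q - 1) * 2 from by ring, pow_mul, hchiM, one_pow]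
  have hrodd1 : r % 2 = 1 → ((-1 : ℂ) ^ r = -1) := fun h => Odd.neg_one_pow (Nat.odd_iff.mpr h)
  have hflip : ∀ e c : ℕ, r % 2 = 1 → r + e + c = 2 * (q - 1) →
      jacobiSum (χ ^ e) (χ ^ r) = - jacobiSum (χ ^ r) (χ ^ c) := by
    intro e c hro hsum
    rw [jacobiSum_comm, jacobiSum_flip (χ ^ r) (χ ^ e), ← pow_add,
      hchi_inv (r + e) c (by omega), hχe_neg r, hrodd1 hro]
    ring
  -- the combined Jacobi-sum pair function
  set Q : ℕ → ℂ := fun a => jacobiSum (χ ^ r) (χ ^ (2 * a)) + jacobiSum (χ ^ r) (χ ^ (2 * (m + a)))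
    with hQ
  have hQper : ∀ a, Q (a + m) = Q a := by
    intro a
    rw [hQ]
    simp only
    rw [show 2 * (a + m) = 2 * (m + a) from by ring,
      show 2 * (m + (a + m)) = 2 * a + (q - 1) from by omega, pow_add, hchiM, mul_one]
    exact add_comm _ _
  have hQmod : ∀ a, Q a = Q (a % m) := by
    intro a
    have hgen : ∀ c t, Q (t + m * c) = Q t := by
      intro c
      induction c with
      | zero => intro t; simp
      | succ c ih =>
        intro t
        rw [show t + m * (c + 1) = t + m * c + m from by ring, hQper, ih]
    conv_lhs => rw [show a = a % m + m * (a / m) from (Nat.mod_add_div a m).symm]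
    exact hgen _ _
  -- the exponent bookkeeping function
  set K : ℕ → ℕ := fun j =>
    if r % 2 = 0 then (if j % 2 = 0 then j / 2 else (m + j) / 2)
    else (if j % 2 = 0 then (5 * m - r - j) / 2 else (6 * m - r - j) / 2) with hK
  have hr4 : r ≤ 4 * m - 1 := by omega
  -- per-column identity
  have hlamQ : ∀ j : Fin m, lam j = (1 / 2 : ℂ) * Q (K (j : ℕ)) := by
    intro j
    have hj : (j : ℕ) < m := j.isLt
    have h4 := hkey j
    rw [Finset.sum_range_succ, Finset.sum_range_succ, Finset.sum_range_succ,
      Finset.sum_range_one, hsgn 0 (j : ℕ), hsgn 1 (j : ℕ), hsgn 2 (j : ℕ), hsgn 3 (j : ℕ)] at h4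
    norm_num at h4
    rcases Nat.mod_two_eq_zero_or_one r with hr0 | hr0 <;>
      rcases Nat.mod_two_eq_zero_or_one (j : ℕ) with hj0 | hj0
    · -- r even, j even
      rw [Even.neg_one_pow (Nat.even_iff.mpr hr0), Even.neg_one_pow (Nat.even_iff.mpr hj0)] at h4
      simp only [hQ, hK, hr0, hj0, reduceIte]
      rw [show 2 * ((j : ℕ) / 2) = (j : ℕ) from by omega,
        show 2 * (m + (j : ℕ) / 2) = 2 * m + (j : ℕ) from by omega,
        jacobiSum_comm (χ ^ r) (χ ^ ((j : ℕ))), jacobiSum_comm (χ ^ r) (χ ^ (2 * m + (j : ℕ)))]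
      linear_combination h4 / 4
    · -- r even, j odd
      rw [Even.neg_one_pow (Nat.even_iff.mpr hr0), Odd.neg_one_pow (Nat.odd_iff.mpr hj0)] at h4
      simp only [hQ, hK, hr0, hj0, reduceIte]
      rw [if_neg (by decide : ¬((1:ℕ) = 0))]
      rw [show 2 * ((m + (j : ℕ)) / 2) = m + (j : ℕ) from by omega,
        show 2 * (m + (m + (j : ℕ)) / 2) = 3 * m + (j : ℕ) from by omega,
        jacobiSum_comm (χ ^ r) (χ ^ (m + (j : ℕ))), jacobiSum_comm (χ ^ r) (χ ^ (3 * m + (j : ℕ)))]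
      linear_combination h4 / 4
    · -- r odd, j even
      rw [hrodd1 hr0, Even.neg_one_pow (Nat.even_iff.mpr hj0)] at h4
      rw [hflip (m + (j : ℕ)) (7 * m - r - (j : ℕ)) hr0 (by omega),
        hflip (3 * m + (j : ℕ)) (5 * m - r - (j : ℕ)) hr0 (by omega)] at h4
      simp only [hQ, hK, hr0, hj0, reduceIte]
      rw [if_neg (by decide : ¬((1:ℕ) = 0))]
      rw [show 2 * ((5 * m - r - (j : ℕ)) / 2) = 5 * m - r - (j : ℕ) from by omega,
        show 2 * (m + (5 * m - r - (j : ℕ)) / 2) = 7 * m - r - (j : ℕ) from by omega]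
      linear_combination h4 / 4
    · -- r odd, j odd
      rw [hrodd1 hr0, Odd.neg_one_pow (Nat.odd_iff.mpr hj0)] at h4
      rw [hflip ((j : ℕ)) (8 * m - r - (j : ℕ)) hr0 (by omega),
        hflip (2 * m + (j : ℕ)) (6 * m - r - (j : ℕ)) hr0 (by omega)] at h4
      simp only [hQ, hK, hr0, hj0, reduceIte]
      rw [if_neg (by decide : ¬((1:ℕ) = 0))]
      rw [if_neg (by decide : ¬((1:ℕ) = 0))]
      rw [show 2 * ((6 * m - r - (j : ℕ)) / 2) = 6 * m - r - (j : ℕ) from by omega,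
        show 2 * (m + (6 * m - r - (j : ℕ)) / 2) = 8 * m - r - (j : ℕ) from by omega]
      linear_combination h4 / 4
  -- injectivity of the reindexing map
  have hKinj : ∀ j j' : Fin m, K (j : ℕ) % m = K (j' : ℕ) % m → j = j' := by
    intro j j' hmod
    have hj : (j : ℕ) < m := j.isLt
    have hj' : (j' : ℕ) < m := j'.isLt
    refine Fin.ext ?_
    rcases Nat.mod_two_eq_zero_or_one r with hr0 | hr0 <;>
        rcases Nat.mod_two_eq_zero_or_one (j : ℕ) with hj0 | hj0 <;>
        rcases Nat.mod_two_eq_zero_or_one (j' : ℕ) with hj'0 | hj'0 <;>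
        norm_num [hK, hr0, hj0, hj'0] at hmod <;>
        (try (have heqK := eq_of_mod_eq hmod (by omega) (by omega))) <;>
        omega
  have hbij : ∏ j : Fin m, Q (K (j : ℕ)) = ∏ k ∈ Finset.range m, Q k := by
    refine Finset.prod_bij (fun j _ => K (j : ℕ) % m) ?_ ?_ ?_ ?_
    · intro j _
      exact Finset.mem_range.mpr (Nat.mod_lt _ hm0)
    · intro j hjm j' hj'm h
      exact hKinj j j' h
    · intro k hk
      have hsurj2 := Finset.surj_on_of_inj_on_of_card_le
        (s := (Finset.univ : Finset (Fin m))) (t := Finset.range m)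
        (fun j _ => K (j : ℕ) % m)
        (fun j _ => Finset.mem_range.mpr (Nat.mod_lt _ hm0))
        (fun j j' hjm hj'm h => hKinj j j' h)
        (by rw [Finset.card_range, Finset.card_univ, Fintype.card_fin])
      obtain ⟨a, ha, hae⟩ := hsurj2 k hk
      exact ⟨a, ha, hae.symm⟩
    · intro j _
      exact hQmod (K (j : ℕ))
  calc (Matrix.of fun i j => (χ ^ r) (b i + b j) + (χ ^ r) (b i - b j)).det
      = ∏ j : Fin m, lam j := by rw [hdetM, hdetA]
    _ = ∏ j : Fin m, ((1 / 2 : ℂ) * Q (K (j : ℕ))) := Fintype.prod_congr _ _ hlamQ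
    _ = (1 / 2 : ℂ) ^ m * ∏ j : Fin m, Q (K (j : ℕ)) := by
        rw [Finset.prod_mul_distrib, Finset.prod_const, Finset.card_univ, Fintype.card_fin]
    _ = (1 / 2 : ℂ) ^ m * ∏ k ∈ Finset.range m, Q k := by rw [hbij]
    _ = (1 / 2 : ℂ) ^ m * ∏ k ∈ Finset.range m,
          (jacobiSum (χ ^ r) (χ ^ (2 * k))
            + jacobiSum (χ ^ r) (χ ^ ((q - 1) / 2) * χ ^ (2 * k))) := by
        congr 1
        refine Finset.prod_congr rfl fun k _ => ?_
        rw [hQ]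
        simp only
        rw [show χ ^ ((q - 1) / 2) * χ ^ (2 * k) = χ ^ (2 * (m + k)) from by
          rw [← pow_add]
          congr 1
          omega]
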